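/- arXiv:1401.5457 — 3 statements merged into one kernel-verified Lean document; each statement's English description precedes it below -/
import Mathlib

section
/- Let $(X,\mu)$ be a measure space, $q \in (1,\infty)$ with conjugate exponent $q'$, $A \ge 1$, and let $F \subset X$ be measurable with $0 < \mu(F) < \infty$. Suppose $b : X \to \mathbb{R}$ satisfies $\int_F b\,d\mu = \mu(F)$ and $\int_F |b|^q\,d\mu \le A\,\mu(F)$. If $\{Q_i\}_i$ is a countable family of pairwise disjoint measurable subsets of $F$ such that $|\mu(Q_i)^{-1}\int_{Q_i} b\,d\mu| < 1/2$ for every $i$ (with $\mu(Q_i)>0$), then $\mu(\bigcup_i Q_i) \le (1 - A/(2A)^{q'})\,\mu(F)$. -/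
open MeasureTheory

set_option maxHeartbeats 1000000

/-- Stopping-time estimate for the first (non-accretivity) stopping condition.
If `∫_F b dμ = μ(F)`, `∫_F |b|^q dμ ≤ A μ(F)` and `{Q_i}` are pairwise disjoint
measurable subsets of `F` of positive measure with `|⟨b⟩_{Q_i}| < 1/2`, then
`μ(⋃ Q_i) ≤ (1 - A/(2A)^{q'}) μ(F)`. -/
theorem stmt_0 {X : Type*} [MeasurableSpace X] (μ : Measure X)
    (q q' A : ℝ) (hq : 1 < q) (hq' : q' = q / (q - 1)) (hA : 1 ≤ A)
    (F : Set X) (hF : MeasurableSet F) (hF0 : 0 < μ F) (hFfin : μ F ≠ ⊤)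
    (b : X → ℝ) (hbint : IntegrableOn b F μ)
    (hbq : IntegrableOn (fun x => |b x| ^ q) F μ)
    (hmean : ∫ x in F, b x ∂μ = (μ F).toReal)
    (hLq : ∫ x in F, |b x| ^ q ∂μ ≤ A * (μ F).toReal)
    (Q : ℕ → Set X) (hQm : ∀ i, MeasurableSet (Q i))
    (hQF : ∀ i, Q i ⊆ F) (hQd : Pairwise (Function.onFun Disjoint Q))
    (hQ0 : ∀ i, 0 < μ (Q i))
    (hsmall : ∀ i, |(μ (Q i)).toReal⁻¹ * ∫ x in Q i, b x ∂μ| < 1 / 2) :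
    (μ (⋃ i, Q i)).toReal ≤ (1 - A / (2 * A) ^ q') * (μ F).toReal := by
  set G : Set X := ⋃ i, Q i with hG
  have hGm : MeasurableSet G := MeasurableSet.iUnion hQm
  have hGF : G ⊆ F := Set.iUnion_subset hQF
  have hGfin : μ G ≠ ⊤ := fun h => hFfin (top_le_iff.mp (h ▸ measure_mono hGF))
  have hQfin : ∀ i, μ (Q i) ≠ ⊤ := fun i =>
    fun h => hFfin (top_le_iff.mp (h ▸ measure_mono (hQF i)))
  set D : Set X := F \ G with hD
  have hDm : MeasurableSet D := hF.diff hGm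
  have hDfin : μ D ≠ ⊤ := fun h => hFfin (top_le_iff.mp (h ▸ measure_mono Set.diff_subset))
  set m : ℝ := (μ F).toReal with hm
  set g : ℝ := (μ G).toReal with hgdef
  set d : ℝ := (μ D).toReal with hddef
  have hm0 : 0 < m := ENNReal.toReal_pos hF0.ne' hFfin
  have hd0 : 0 ≤ d := ENNReal.toReal_nonneg
  have hA0 : 0 < A := lt_of_lt_of_le one_pos hA
  -- measure additivity: m = d + g
  have hmeas_diff : μ D = μ F - μ G := measure_diff hGF hGm.nullMeasurableSet hGfin
  have hgle : μ G ≤ μ F := measure_mono hGF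
  have hsum_meas : m = d + g := by
    rw [hddef, hmeas_diff, ENNReal.toReal_sub_of_le hgle hFfin]
    have := ENNReal.toReal_mono hFfin hgle
    linarith
  have hg0 : 0 ≤ g := ENNReal.toReal_nonneg
  -- exponent facts
  have hq0 : 0 < q := lt_trans one_pos hq
  have hq1 : 0 < q - 1 := by linarith
  have hq'0 : 0 < q' := by rw [hq']; positivity
  have hpq : q.HolderConjugate q' := (Real.holderConjugate_iff_eq_conjExponent hq).2 hq'
  have hq'q : q' / q = q' - 1 := by rw [hq']; field_simp; ring
  -- Step 1 : ∫_G b ≤ g / 2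
  have hintG : IntegrableOn b G μ := hbint.mono_set hGF
  have hintQ : ∀ i, IntegrableOn b (Q i) μ := fun i => hbint.mono_set (hQF i)
  have htsum_meas : ∑' i, μ (Q i) = μ G := (measure_iUnion hQd hQm).symm
  have hsummeas : Summable fun i => (μ (Q i)).toReal :=
    ENNReal.summable_toReal (by rw [htsum_meas]; exact hGfin)
  have htsum_meas' : ∑' i, (μ (Q i)).toReal = g := by
    rw [hgdef, ← htsum_meas, ENNReal.tsum_toReal_eq hQfin]
  have hbound : ∀ i, |∫ x in Q i, b x ∂μ| ≤ (1 / 2) * (μ (Q i)).toReal := by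
    intro i
    have hc : 0 < (μ (Q i)).toReal := ENNReal.toReal_pos (hQ0 i).ne' (hQfin i)
    have := hsmall i
    rw [abs_mul, abs_of_nonneg (inv_nonneg.mpr hc.le)] at this
    calc |∫ x in Q i, b x ∂μ|
        = (μ (Q i)).toReal * ((μ (Q i)).toReal⁻¹ * |∫ x in Q i, b x ∂μ|) := by
          field_simp
      _ ≤ (μ (Q i)).toReal * (1/2) := by
          exact mul_le_mul_of_nonneg_left this.le hc.le
      _ = (1/2) * (μ (Q i)).toReal := by ring
  have habs_sum : Summable fun i => |∫ x in Q i, b x ∂μ| :=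
    Summable.of_nonneg_of_le (fun i => abs_nonneg _) hbound (hsummeas.mul_left _)
  have hsummint : Summable fun i => ∫ x in Q i, b x ∂μ := habs_sum.of_abs
  have hGint_le : ∫ x in G, b x ∂μ ≤ g / 2 := by
    rw [hG, integral_iUnion hQm hQd hintG]
    calc ∑' i, ∫ x in Q i, b x ∂μ
        ≤ |∑' i, ∫ x in Q i, b x ∂μ| := le_abs_self _
      _ ≤ ∑' i, |∫ x in Q i, b x ∂μ| := by
          simpa [Real.norm_eq_abs] using norm_tsum_le_tsum_norm
            (f := fun i => ∫ x in Q i, b x ∂μ)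
            (by simpa [Real.norm_eq_abs] using habs_sum)
      _ ≤ ∑' i, (1 / 2) * (μ (Q i)).toReal :=
          Summable.tsum_le_tsum hbound habs_sum (hsummeas.mul_left _)
      _ = (1 / 2) * ∑' i, (μ (Q i)).toReal := tsum_mul_left
      _ = g / 2 := by rw [htsum_meas']; ring
  -- Step 2 : Hölder on D
  have hbD : IntegrableOn b D μ := hbint.mono_set Set.diff_subset
  have hbqD : IntegrableOn (fun x => |b x| ^ q) D μ := hbq.mono_set Set.diff_subset
  have hmemD : MemLp b (ENNReal.ofReal q) (μ.restrict D) := by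
    have hne0 : ENNReal.ofReal q ≠ 0 := by
      simp [ENNReal.ofReal_eq_zero, not_le, hq0]
    have hnetop : ENNReal.ofReal q ≠ ⊤ := ENNReal.ofReal_ne_top
    rw [← memLp_norm_rpow_iff hbD.aestronglyMeasurable hne0 hnetop,
      ENNReal.div_self hne0 hnetop, ENNReal.toReal_ofReal hq0.le,
      memLp_one_iff_integrable]
    simpa [Real.norm_eq_abs, IntegrableOn] using hbqD
  have hfinD : IsFiniteMeasure (μ.restrict D) := by
    constructor
    rw [Measure.restrict_apply_univ]
    exact lt_top_iff_ne_top.mpr hDfin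
  have hmem1 : MemLp (fun _ : X => (1 : ℝ)) (ENNReal.ofReal q') (μ.restrict D) :=
    memLp_const 1
  have holder : ∫ x in D, |b x| ∂μ ≤
      (∫ x in D, |b x| ^ q ∂μ) ^ (1/q) * d ^ (1/q') := by
    have h := integral_mul_le_Lp_mul_Lq_of_nonneg hpq
      (f := fun x => |b x|) (g := fun _ => (1:ℝ)) (μ := μ.restrict D)
      (Filter.Eventually.of_forall fun x => abs_nonneg _)
      (Filter.Eventually.of_forall fun x => zero_le_one)
      (by simpa [Real.norm_eq_abs, abs_abs] using hmemD.norm) hmem1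
    simpa [Real.one_rpow, hddef, Measure.restrict_apply_univ, measureReal_def] using h
  have hLqD : ∫ x in D, |b x| ^ q ∂μ ≤ A * m := by
    refine le_trans ?_ hLq
    apply setIntegral_mono_set hbq
    · exact Filter.Eventually.of_forall fun x => Real.rpow_nonneg (abs_nonneg _) _
    · exact Filter.Eventually.of_forall (fun x hx => hx.1)
  have hDb_le : ∫ x in D, b x ∂μ ≤ (A * m) ^ (1/q) * d ^ (1/q') := by
    calc ∫ x in D, b x ∂μ ≤ |∫ x in D, b x ∂μ| := le_abs_self _
      _ ≤ ∫ x in D, |b x| ∂μ := by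
          simpa [Real.norm_eq_abs] using
            norm_integral_le_integral_norm (μ := μ.restrict D) b
      _ ≤ (∫ x in D, |b x| ^ q ∂μ) ^ (1/q) * d ^ (1/q') := holder
      _ ≤ (A * m) ^ (1/q) * d ^ (1/q') := by
          apply mul_le_mul_of_nonneg_right _ (Real.rpow_nonneg hd0 _)
          apply Real.rpow_le_rpow _ hLqD (by positivity)
          exact integral_nonneg fun x => Real.rpow_nonneg (abs_nonneg _) _
  -- Step 3 : combine
  have hsplit : ∫ x in F, b x ∂μ = (∫ x in D, b x ∂μ) + ∫ x in G, b x ∂μ := by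
    rw [hD, integral_diff hGm hbint hGF]
    ring
  have hgm : g ≤ m := by linarith
  have hkey : m / 2 ≤ (A * m) ^ (1/q) * d ^ (1/q') := by
    have h := hmean
    rw [hsplit] at h
    linarith [hDb_le, hGint_le, hgm]
  -- Step 4 : algebra
  have hkey' : (m / 2) ^ q' ≤ (A * m) ^ (q' - 1) * d := by
    have h2 : ((A * m) ^ (1/q) * d ^ (1/q')) ^ q' =
        (A * m) ^ (q' - 1) * d := by
      rw [Real.mul_rpow (Real.rpow_nonneg (by positivity) _) (Real.rpow_nonneg hd0 _),
        ← Real.rpow_mul (by positivity : (0:ℝ) ≤ A * m), ← Real.rpow_mul hd0,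
        one_div_mul_cancel hq'0.ne', Real.rpow_one,
        show 1/q * q' = q'/q by ring, hq'q]
    calc (m/2) ^ q' ≤ ((A * m) ^ (1/q) * d ^ (1/q')) ^ q' :=
          Real.rpow_le_rpow (by positivity) hkey hq'0.le
      _ = (A * m) ^ (q' - 1) * d := h2
  have hident : (m / 2) ^ q' / (A * m) ^ (q' - 1) = A / (2 * A) ^ q' * m := by
    rw [Real.div_rpow hm0.le (by norm_num : (0:ℝ) ≤ 2),
      Real.mul_rpow hA0.le hm0.le,
      Real.mul_rpow (by norm_num : (0:ℝ) ≤ 2) hA0.le,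
      Real.rpow_sub hA0, Real.rpow_sub hm0, Real.rpow_one, Real.rpow_one]
    have h2q : (0:ℝ) < (2:ℝ) ^ q' := Real.rpow_pos_of_pos (by norm_num) _
    have hAq : (0:ℝ) < A ^ q' := Real.rpow_pos_of_pos hA0 _
    have hmq : (0:ℝ) < m ^ q' := Real.rpow_pos_of_pos hm0 _
    field_simp
  have hd_lower : A / (2 * A) ^ q' * m ≤ d := by
    rw [← hident, div_le_iff₀ (Real.rpow_pos_of_pos (by positivity) _)]
    calc (m/2) ^ q' ≤ (A * m) ^ (q' - 1) * d := hkey'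
      _ = d * (A * m) ^ (q' - 1) := by ring
  -- conclude
  show g ≤ (1 - A / (2 * A) ^ q') * m
  have hexp : (1 - A / (2 * A) ^ q') * m = m - A / (2 * A) ^ q' * m := by ring
  linarith [hd_lower, hsum_meas]
end

section
/- Let $\mu$ be a Borel measure on $\mathbb{R}^n$ with $\mu(B(x,r)) \lesssim r^m$, and let $s_t$ satisfy the Hölder condition $|s_t(x,y) - s_t(x,z)| \le C \frac{|y-z|^\alpha}{(t + |x-y|)^{m+\alpha}}$ for $|y-z| < t/2$. Let $Q, R$ be dyadic cubes with $\ell(R) = 2^\ell \ell(Q)$ for some $\ell \ge 1$, and suppose the long distance $D(Q,R) := d(Q,R) + \ell(Q) + \ell(R)$ satisfies $2^j \ell(R) \le D(Q,R) < 2^{j+1}\ell(R)$ for some $j \ge 0$. Assume $\gamma \in (0,1)$ satisfies $m\gamma/(1-\gamma) \le \alpha/4$, set $\theta(j) = \lceil (\gamma j + r)/(1-\gamma) \rceil$ with $r \ge 1$ a fixed integer, and let $S_0$ be a cube with $\ell(S_0) = 2^{\ell + j + \theta(j)} \ell(Q)$. Then for all $x \in R$, $y \in Q$, and $t \in (\ell(R)/2,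 \ell(R))$: $|s_t(x,y) - s_t(x,c_Q)| \le C' 2^{-\alpha \ell} 2^{-3\alpha j/4} \ell(S_0)^{-m}$, where $c_Q$ is the center of $Q$. -/
open MeasureTheory

/-- Distance between two sets in a pseudometric space. -/
noncomputable def setDist {E : Type*} [PseudoMetricSpace E] (A B : Set E) : ℝ :=
  sInf {d | ∃ a ∈ A, ∃ b ∈ B, d = dist a b}

/-- The axis-parallel cube with center `c` and side length `ℓ`. -/
def cube {n : ℕ} (c : Fin n → ℝ) (ℓ : ℝ) : Set (Fin n → ℝ) :=
  {y | ∀ i, |y i - c i| ≤ ℓ / 2}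

set_option maxHeartbeats 1000000 in
/-- Kernel Hölder estimate in the case `ℓ(Q) < ℓ(R)`: for cubes with
`ℓ(R) = 2^k ℓ(Q)` (`k ≥ 1`) and `2^j ℓ(R) ≤ D(Q,R) < 2^{j+1} ℓ(R)`, setting
`θ(j) = ⌈(γj+r)/(1-γ)⌉` and `ℓ(S₀) = 2^{k+j+θ(j)} ℓ(Q)`, one has for `x ∈ R`, `y ∈ Q`
and `t ∈ (ℓ(R)/2, ℓ(R))` that
`|s_t(x,y) - s_t(x,c_Q)| ≤ C' 2^{-αk} 2^{-3αj/4} ℓ(S₀)^{-m}`. -/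
theorem stmt_6 (n : ℕ) (m α γ C₀ C : ℝ) (r : ℕ)
    (hm : 0 < m) (hα : 0 < α) (hγ0 : 0 < γ) (hγ1 : γ < 1)
    (hγ : m * γ / (1 - γ) ≤ α / 4) (hr : 1 ≤ r) (hC₀ : 0 < C₀) (hC : 0 < C) :
    ∃ C' : ℝ, 0 < C' ∧
      ∀ (μ : Measure (Fin n → ℝ)) (s : ℝ → (Fin n → ℝ) → (Fin n → ℝ) → ℝ),
        (∀ (x : Fin n → ℝ) (ρ : ℝ), 0 < ρ →
          μ (Metric.ball x ρ) ≤ ENNReal.ofReal (C₀ * ρ ^ m)) →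
        (∀ (t : ℝ), 0 < t → ∀ x y z : Fin n → ℝ, dist y z < t / 2 →
          |s t x y - s t x z| ≤ C * dist y z ^ α / (t + dist x y) ^ (m + α)) →
        ∀ (cQ cR : Fin n → ℝ) (ℓQ ℓR : ℝ) (k j : ℕ),
          0 < ℓQ → 1 ≤ k → ℓR = 2 ^ k * ℓQ →
          2 ^ j * ℓR ≤ setDist (cube cQ ℓQ) (cube cR ℓR) + ℓQ + ℓR →
          setDist (cube cQ ℓQ) (cube cR ℓR) + ℓQ + ℓR < 2 ^ (j + 1) * ℓR →
          ∀ x ∈ cube cR ℓR, ∀ y ∈ cube cQ ℓQ,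
            ∀ t ∈ Set.Ioo (ℓR / 2) ℓR,
              |s t x y - s t x cQ| ≤
                C' * (2 : ℝ) ^ (-(α * k)) * (2 : ℝ) ^ (-(3 * α * j / 4)) *
                  ((2 : ℝ) ^ ((k : ℤ) + j + ⌈(γ * j + r) / (1 - γ)⌉) * ℓQ) ^ (-m) := by
  have h1γ : (0:ℝ) < 1 - γ := by linarith
  refine ⟨C * Real.exp (Real.log 2 * (2*(m+α) - α + m*((r:ℝ)/(1-γ)+1))), by positivity, ?_⟩
  intro μ s hμ hs cQ cR ℓQ ℓR k j hℓQ hk hℓR hD1 hD2 x hx y hy t ht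
  obtain ⟨ht1, ht2⟩ := ht
  have hℓR0 : 0 < ℓR := by rw [hℓR]; positivity
  have ht0 : 0 < t := lt_trans (by positivity) ht1
  set θ : ℤ := ⌈(γ * (j:ℝ) + r) / (1 - γ)⌉ with hθ
  -- basic geometry
  have h_ycQ : dist y cQ ≤ ℓQ / 2 := by
    refine (dist_pi_le_iff (by positivity)).2 fun i => ?_
    rw [Real.dist_eq]; exact hy i
  have hQ2 : ℓQ * 2 ≤ ℓR := by
    have h1 : (2:ℝ)^1 ≤ (2:ℝ)^k := pow_le_pow_right₀ one_le_two hk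
    nlinarith [hℓQ.le]
  have hlt : dist y cQ < t / 2 := by linarith
  have hH := hs t ht0 x y cQ hlt
  have hden_pos : (0:ℝ) < 2^j * ℓR / 4 := by positivity
  have hden_lb : 2^j * ℓR / 4 ≤ t + dist x y := by
    rcases Nat.eq_zero_or_pos j with hj | hj
    · subst hj
      have := dist_nonneg (x := x) (y := y)
      simp only [pow_zero, one_mul]
      linarith
    · have hset : setDist (cube cQ ℓQ) (cube cR ℓR) ≤ dist y x := by
        apply csInf_le
        · exact ⟨0, fun d hd => by obtain ⟨a, _, b, _, rfl⟩ := hd; exact dist_nonneg⟩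
        · exact ⟨y, hy, x, hx, rfl⟩
      have hdc : dist y x = dist x y := dist_comm y x
      have h2j : (2:ℝ)^1 ≤ (2:ℝ)^j := pow_le_pow_right₀ one_le_two hj
      nlinarith [mul_le_mul_of_nonneg_right h2j hℓR0.le]
  -- numeric setup
  have hu2 : (0:ℝ) < ℓQ / 2 := by positivity
  have hbig : (0:ℝ) < (2:ℝ)^((k:ℤ) + (j:ℤ) + θ) * ℓQ := by positivity
  have step2 : C * dist y cQ ^ α / (t + dist x y) ^ (m + α) ≤
      C * (ℓQ/2) ^ α / (2^j * ℓR / 4) ^ (m + α) := by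
    gcongr
    all_goals first | exact hα.le | linarith
  -- the exponential comparison
  have hlog2 : (0:ℝ) ≤ Real.log 2 := Real.log_nonneg one_le_two
  have hc1 : ((θ:ℝ) - 1) * (1 - γ) ≤ γ * j + r := by
    have h := Int.ceil_lt_add_one ((γ * (j:ℝ) + r) / (1 - γ))
    have h2 : ((θ:ℝ) - 1) ≤ (γ * (j:ℝ) + r) / (1 - γ) := by rw [hθ]; push_cast; linarith
    calc ((θ:ℝ) - 1) * (1 - γ) ≤ ((γ * (j:ℝ) + r) / (1 - γ)) * (1 - γ) :=
          mul_le_mul_of_nonneg_right h2 h1γ.le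
      _ = γ * j + r := div_mul_cancel₀ _ h1γ.ne'
  have hγ'' : m * γ ≤ α / 4 * (1 - γ) := by
    rw [div_le_iff₀ h1γ] at hγ; linarith
  have hbr : m * (θ:ℝ) ≤ α * j / 4 + m * ((r:ℝ)/(1-γ) + 1) := by
    have e : m * ((r:ℝ)/(1-γ) + 1) * (1 - γ) = m * (r + (1 - γ)) := by field_simp
    have key2 : m * (θ:ℝ) * (1 - γ) ≤ (α * j / 4 + m * ((r:ℝ)/(1-γ) + 1)) * (1 - γ) := by
      rw [add_mul, e]
      nlinarith [mul_le_mul_of_nonneg_left hc1 hm.le,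
        mul_le_mul_of_nonneg_right hγ'' (Nat.cast_nonneg j : (0:ℝ) ≤ (j:ℝ))]
    exact le_of_mul_le_mul_right key2 h1γ
  have l4 : Real.log 4 = 2 * Real.log 2 := by
    rw [show (4:ℝ) = 2^2 by norm_num, Real.log_pow]; push_cast; ring
  have lden : Real.log (2^j * ℓR / 4) =
      (j:ℝ) * Real.log 2 + ((k:ℝ) * Real.log 2 + Real.log ℓQ) - 2 * Real.log 2 := by
    rw [hℓR, Real.log_div (by positivity) (by norm_num),
      Real.log_mul (by positivity) (by positivity),
      Real.log_mul (by positivity) hℓQ.ne', Real.log_pow, Real.log_pow, l4]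
  have eL : C * (ℓQ/2) ^ α / (2^j * ℓR / 4) ^ (m + α) =
      C * Real.exp ((Real.log ℓQ - Real.log 2) * α -
        ((j:ℝ) * Real.log 2 + (k:ℝ) * Real.log 2 + Real.log ℓQ - 2 * Real.log 2) * (m + α)) := by
    rw [Real.rpow_def_of_pos hu2, Real.rpow_def_of_pos hden_pos,
      Real.log_div hℓQ.ne' two_ne_zero, lden, mul_div_assoc, ← Real.exp_sub]
    congr 1
    exact congrArg Real.exp (by ring)
  have eR : C * Real.exp (Real.log 2 * (2*(m+α) - α + m*((r:ℝ)/(1-γ)+1))) *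
        (2:ℝ) ^ (-(α * (k:ℝ))) * (2:ℝ) ^ (-(3 * α * (j:ℝ) / 4)) *
        ((2:ℝ) ^ ((k:ℤ) + (j:ℤ) + θ) * ℓQ) ^ (-m) =
      C * Real.exp (Real.log 2 * (2*(m+α) - α + m*((r:ℝ)/(1-γ)+1)) +
        Real.log 2 * (-(α * (k:ℝ))) + Real.log 2 * (-(3 * α * (j:ℝ) / 4)) +
        (((k:ℝ) + (j:ℝ) + (θ:ℝ)) * Real.log 2 + Real.log ℓQ) * (-m)) := by
    rw [Real.rpow_def_of_pos two_pos, Real.rpow_def_of_pos two_pos,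
      Real.rpow_def_of_pos hbig, Real.log_mul (by positivity) hℓQ.ne', Real.log_zpow]
    rw [mul_assoc, mul_assoc, mul_assoc, ← Real.exp_add, ← Real.exp_add, ← Real.exp_add]
    congr 2
    push_cast
    ring
  have hEE : (Real.log ℓQ - Real.log 2) * α -
        ((j:ℝ) * Real.log 2 + (k:ℝ) * Real.log 2 + Real.log ℓQ - 2 * Real.log 2) * (m + α) ≤
      Real.log 2 * (2*(m+α) - α + m*((r:ℝ)/(1-γ)+1)) +
        Real.log 2 * (-(α * (k:ℝ))) + Real.log 2 * (-(3 * α * (j:ℝ) / 4)) +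
        (((k:ℝ) + (j:ℝ) + (θ:ℝ)) * Real.log 2 + Real.log ℓQ) * (-m) := by
    nlinarith [mul_le_mul_of_nonneg_left hbr hlog2]
  have key : C * (ℓQ/2) ^ α / (2^j * ℓR / 4) ^ (m + α) ≤
      C * Real.exp (Real.log 2 * (2*(m+α) - α + m*((r:ℝ)/(1-γ)+1))) *
        (2:ℝ) ^ (-(α * (k:ℝ))) * (2:ℝ) ^ (-(3 * α * (j:ℝ) / 4)) *
        ((2:ℝ) ^ ((k:ℤ) + (j:ℤ) + θ) * ℓQ) ^ (-m) := by
    rw [eL, eR]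
    exact mul_le_mul_of_nonneg_left (Real.exp_le_exp.mpr hEE) hC.le
  calc |s t x y - s t x cQ| ≤ C * dist y cQ ^ α / (t + dist x y) ^ (m + α) := hH
    _ ≤ C * (ℓQ/2) ^ α / (2^j * ℓR / 4) ^ (m + α) := step2
    _ ≤ _ := key
end

section
/- Let $\mu$ be a Borel measure on $\mathbb{R}^n$, $q \in (1, 2]$, and let $\theta_t$ be operators such that $(x,t) \mapsto \theta_t 1(x)$ is measurable. Suppose $\mathrm{Car} := \sup_{Q_0} \left[ \mu(9 Q_0)^{-1} \int_{Q_0} ( \int_0^{\ell(Q_0)} |\theta_t 1(x)|^2 \frac{dt}{t} )^{q/2} d\mu(x) \right]^{1/q} < \infty$, the supremum over all cubes $Q_0$. Fix a dyadic grid $\mathcal{D}$, an integer $r$ with $2^{r(1-\gamma)} \ge 10$, and for each $S \in \mathcal{D}$ set $A_S(x)^2 = \sum_{R \in \mathcal{D}_{good}, R^{(r)} = S} 1_R(x) \int_{\ell(R)/2}^{\ell(R)} |\theta_t 1(x)|^2 \frac{dt}{t}$, where every good cube $R$ with $R^{(r)} = S \subset Q$ satisfies $d(R, Q^c) \ge 9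 \ell(R)$. Then for every $Q \in \mathcal{D}$: $\int_Q \left[ \sum_{S \subset Q} A_S(x)^2 \right]^{q/2} d\mu(x) \le C \, \mathrm{Car}^q \, \mu(Q)$. -/
open MeasureTheory ENNReal Set Metric

/-- The standard dyadic cube `2^k(l + [0,1)^n)`; its side length is `2^k`. -/
def dCube {n : ℕ} (Q : ℤ × (Fin n → ℤ)) : Set (Fin n → ℝ) :=
  {x | ∀ i, (2 : ℝ) ^ Q.1 * Q.2 i ≤ x i ∧ x i < (2 : ℝ) ^ Q.1 * (Q.2 i + 1)}

/-- The dyadic parent of a dyadic cube index. -/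
def dParent {n : ℕ} (Q : ℤ × (Fin n → ℤ)) : ℤ × (Fin n → ℤ) :=
  (Q.1 + 1, fun i => Int.fdiv (Q.2 i) 2)

lemma measurableSet_dCube {n : ℕ} (R : ℤ × (Fin n → ℤ)) : MeasurableSet (dCube R) := by
  have h : dCube R = ⋂ i, {x : Fin n → ℝ |
      (2 : ℝ) ^ R.1 * R.2 i ≤ x i ∧ x i < (2 : ℝ) ^ R.1 * (R.2 i + 1)} := by
    ext x; simp [dCube, Set.mem_iInter]
  rw [h]
  exact MeasurableSet.iInter fun i => MeasurableSet.inter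
    (measurableSet_le measurable_const (measurable_pi_apply i))
    (measurableSet_lt (measurable_pi_apply i) measurable_const)

lemma measurableSet_cube {n : ℕ} (c : Fin n → ℝ) (ℓ : ℝ) : MeasurableSet (cube c ℓ) := by
  have h : cube c ℓ = ⋂ i, {y : Fin n → ℝ | |y i - c i| ≤ ℓ / 2} := by
    ext x; simp [cube, Set.mem_iInter]
  rw [h]
  exact MeasurableSet.iInter fun i =>
    measurableSet_le (((measurable_pi_apply i).sub measurable_const).abs) measurable_const

lemma dCube_floor_eq {n : ℕ} {k : ℤ} {v : Fin n → ℤ} {x : Fin n → ℝ}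
    (h : x ∈ dCube (k, v)) (i : Fin n) : v i = ⌊x i / (2:ℝ)^k⌋ := by
  have hk : (0:ℝ) < 2^k := by positivity
  obtain ⟨h1, h2⟩ := h i
  symm
  rw [Int.floor_eq_iff]
  constructor
  · rw [le_div_iff₀ hk]; linarith
  · rw [div_lt_iff₀ hk]; linarith

lemma dCube_unique {n : ℕ} {k : ℤ} {v v' : Fin n → ℤ} {x : Fin n → ℝ}
    (h : x ∈ dCube (k, v)) (h' : x ∈ dCube (k, v')) : v = v' := by
  funext i
  rw [dCube_floor_eq h i, dCube_floor_eq h' i]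

lemma mem_dCube_floor {n : ℕ} (k : ℤ) (x : Fin n → ℝ) :
    x ∈ dCube (k, fun i => ⌊x i / (2:ℝ)^k⌋) := by
  intro i
  have hk : (0:ℝ) < 2^k := by positivity
  constructor
  · calc (2:ℝ)^k * ⌊x i / 2^k⌋ ≤ 2^k * (x i / 2^k) :=
        mul_le_mul_of_nonneg_left (Int.floor_le _) hk.le
      _ = x i := by field_simp
  · have h1 := Int.lt_floor_add_one (x i / (2:ℝ)^k)
    calc x i = 2^k * (x i / 2^k) := by field_simp
      _ < (2:ℝ)^k * ((⌊x i / 2^k⌋ : ℝ) + 1) := by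
          exact mul_lt_mul_of_pos_left h1 hk

lemma dCube_subset_cube {n : ℕ} (k : ℤ) (v : Fin n → ℤ) :
    dCube (k, v) ⊆ cube (fun i => (2:ℝ)^k * (v i + 1/2)) ((2:ℝ)^k) := by
  intro x hx i
  have hk : (0:ℝ) < 2^k := by positivity
  obtain ⟨h1, h2⟩ := hx i
  rw [abs_le]
  constructor <;> nlinarith

set_option maxHeartbeats 1000000 in
/-- Carleson estimate for the paraproduct coefficients in the `T1` theorem: if the
global testing constant `Car` (with dilation `9Q₀`) is finite, and every good cube `R`
with `R^{(r)} = S ⊆ Q` satisfies `d(R, Qᶜ) ≥ 9ℓ(R)`, then with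
`A_S(x)² = ∑_{R good, R^{(r)} = S} 1_R(x) ∫_{ℓ(R)/2}^{ℓ(R)} |θ_t1(x)|² dt/t`
one has `∫_Q (∑_{S ⊆ Q} A_S²)^{q/2} dμ ≤ C Car^q μ(Q)` for every dyadic `Q`. -/
theorem stmt_12 (n : ℕ) (q γ : ℝ) (r : ℕ) (hq1 : 1 < q) (hq2 : q ≤ 2)
    (hγ0 : 0 < γ) (hγ1 : γ < 1) (hr : (10 : ℝ) ≤ (2 : ℝ) ^ ((r : ℝ) * (1 - γ))) :
    ∃ C : ENNReal, C ≠ ⊤ ∧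
      ∀ (μ : Measure (Fin n → ℝ)) (θ : ℝ → (Fin n → ℝ) → ℝ),
        Measurable (Function.uncurry θ) →
        ∀ (Good : ℤ × (Fin n → ℤ) → Prop) (Car : ENNReal),
          (∀ (c : Fin n → ℝ) (ℓ : ℝ), 0 < ℓ →
            ∫⁻ x in cube c ℓ,
              (∫⁻ t in Set.Ioc (0 : ℝ) ℓ,
                ENNReal.ofReal ((θ t x) ^ 2 / t)) ^ (q / 2) ∂μ ≤
              Car ^ q * μ (cube c (9 * ℓ))) →
          (∀ R, Good R → ∀ Q : ℤ × (Fin n → ℤ),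
            dCube (dParent^[r] R) ⊆ dCube Q →
            9 * (2 : ℝ) ^ R.1 ≤ setDist (dCube R) (dCube Q)ᶜ) →
          ∀ Q : ℤ × (Fin n → ℤ),
            ∫⁻ x in dCube Q,
              (∑' S : {S : ℤ × (Fin n → ℤ) // dCube S ⊆ dCube Q},
                ∑' R : {R : ℤ × (Fin n → ℤ) // Good R ∧ dParent^[r] R = S.1},
                  (dCube R.1).indicator
                    (fun y => ∫⁻ t in Set.Ioc ((2 : ℝ) ^ R.1.1 / 2) ((2 : ℝ) ^ R.1.1),
                      ENNReal.ofReal ((θ t y) ^ 2 / t)) x) ^ (q / 2) ∂μ ≤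
              C * Car ^ q * μ (dCube Q) := by
  classical
  refine ⟨((4 * 10^n : ℕ) : ℝ≥0∞), ENNReal.natCast_ne_top _, ?_⟩
  intro μ θ hθ Good Car hCar hDist Q
  set g : (Fin n → ℝ) → ℝ → ℝ≥0∞ := fun x t => ENNReal.ofReal ((θ t x)^2 / t) with hg
  set term : (Σ S : {S : ℤ × (Fin n → ℤ) // dCube S ⊆ dCube Q},
      {R : ℤ × (Fin n → ℤ) // Good R ∧ dParent^[r] R = S.1}) → (Fin n → ℝ) → ℝ≥0∞ :=
    fun p x => (dCube p.2.1).indicator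
      (fun y => ∫⁻ t in Set.Ioc ((2:ℝ)^p.2.1.1/2) ((2:ℝ)^p.2.1.1), g y t) x with hterm
  set D : (Fin n → ℝ) → ℝ := fun x => infDist x (dCube Q)ᶜ with hD
  set F : (Fin n → ℝ) → ℝ≥0∞ := fun x => (∑' p, term p x)^(q/2) with hF
  -- rewrite the double sum as a sigma sum
  have hFS : ∀ x : Fin n → ℝ,
      (∑' S : {S : ℤ × (Fin n → ℤ) // dCube S ⊆ dCube Q},
        ∑' R : {R : ℤ × (Fin n → ℤ) // Good R ∧ dParent^[r] R = S.1},
          (dCube R.1).indicator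
            (fun y => ∫⁻ t in Set.Ioc ((2 : ℝ) ^ R.1.1 / 2) ((2 : ℝ) ^ R.1.1),
              ENNReal.ofReal ((θ t y) ^ 2 / t)) x)
      = ∑' p, term p x := fun x => (ENNReal.tsum_sigma' (fun p => term p x)).symm
  -- support properties
  have hSupp : ∀ (x : Fin n → ℝ) p, term p x ≠ 0 →
      x ∈ dCube p.2.1 ∧ 9 * (2:ℝ)^p.2.1.1 ≤ D x := by
    intro x p hne
    have hx : x ∈ dCube p.2.1 := by
      by_contra h
      exact hne (Set.indicator_of_notMem h _)
    refine ⟨hx, ?_⟩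
    have hsd : 9 * (2:ℝ)^p.2.1.1 ≤ setDist (dCube p.2.1) (dCube Q)ᶜ := by
      refine hDist p.2.1 p.2.2.1 Q ?_
      rw [p.2.2.2]; exact p.1.2
    have hkpos : (0:ℝ) < 2^p.2.1.1 := by positivity
    rcases eq_empty_or_nonempty ((dCube Q)ᶜ) with hcc | hcc
    · exfalso
      have hset : {d | ∃ a ∈ dCube p.2.1, ∃ b ∈ (dCube Q)ᶜ, d = dist a b} = ∅ := by
        ext d; simp [hcc]
      rw [setDist, hset, Real.sInf_empty] at hsd
      linarith
    · by_contra hlt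
      push_neg at hlt
      obtain ⟨b, hb, hdb⟩ := (infDist_lt_iff hcc).1 hlt
      have hle : setDist (dCube p.2.1) (dCube Q)ᶜ ≤ dist x b :=
        csInf_le ⟨0, fun d hd => by obtain ⟨a, -, b', -, rfl⟩ := hd; exact dist_nonneg⟩
          ⟨x, hx, b, hb, rfl⟩
      linarith
  -- key pointwise estimate
  have keyA : ∀ (x : Fin n → ℝ) (m : ℤ), (∀ p, term p x ≠ 0 → p.2.1.1 ≤ m) →
      (∑' p, term p x) ≤ ∫⁻ t in Set.Ioc (0:ℝ) ((2:ℝ)^m), g x t := by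
    intro x m hm
    have hzp : ∀ k : ℤ, (2:ℝ)^(k-1) = 2^k/2 := by
      intro k; rw [zpow_sub₀ (by norm_num : (2:ℝ) ≠ 0), zpow_one]
    set val : ℕ → ℝ≥0∞ :=
      fun i => ∫⁻ t in Set.Ioc ((2:ℝ)^(m - (i:ℤ))/2) ((2:ℝ)^(m - (i:ℤ))), g x t with hval
    have h1 : (∑' p, term p x) ≤ ∑' i, val i := by
      rw [ENNReal.tsum_eq_iSup_sum]
      apply iSup_le
      intro s
      rw [← Finset.sum_filter_ne_zero s]
      set t := s.filter (fun p => term p x ≠ 0) with ht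
      have hmem : ∀ p ∈ t, term p x ≠ 0 := fun p hp => (Finset.mem_filter.1 hp).2
      have hterm_eq : ∀ p ∈ t, term p x = val ((m - p.2.1.1).toNat) := by
        intro p hp
        have hx := (hSupp x p (hmem p hp)).1
        have hk := hm p (hmem p hp)
        have h2 : (m - ((m - p.2.1.1).toNat : ℤ)) = p.2.1.1 := by omega
        simp only [hval, h2]
        simp only [hterm]
        exact Set.indicator_of_mem hx _
      have hinj : ∀ p ∈ t, ∀ p' ∈ t,
          (m - p.2.1.1).toNat = (m - p'.2.1.1).toNat → p = p' := by
        rintro ⟨⟨S, hS⟩, ⟨R, hR⟩⟩ hp ⟨⟨S', hS'⟩, ⟨R', hR'⟩⟩ hp' hEq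
        have hk : R.1 ≤ m := hm _ (hmem _ hp)
        have hk' : R'.1 ≤ m := hm _ (hmem _ hp')
        have hEq' : (m - R.1).toNat = (m - R'.1).toNat := hEq
        have hkk : R.1 = R'.1 := by omega
        have hx : x ∈ dCube R := (hSupp x _ (hmem _ hp)).1
        have hx' : x ∈ dCube R' := (hSupp x _ (hmem _ hp')).1
        have hRR : R = R' := by
          obtain ⟨k, v⟩ := R; obtain ⟨k', v'⟩ := R'
          simp only at hkk
          subst hkk
          have hvv := dCube_unique hx hx'
          rw [hvv]
        subst hRR
        have hSS : S = S' := by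
          have hp1 : dParent^[r] R = S := hR.2
          have hp2 : dParent^[r] R = S' := hR'.2
          rw [← hp1, ← hp2]
        subst hSS
        rfl
      calc ∑ p ∈ t, term p x
          = ∑ p ∈ t, val ((m - p.2.1.1).toNat) := Finset.sum_congr rfl hterm_eq
        _ = ∑ i ∈ t.image (fun p => (m - p.2.1.1).toNat), val i := (Finset.sum_image hinj).symm
        _ ≤ ∑' i, val i := ENNReal.sum_le_tsum _
    refine le_trans h1 ?_
    have hdisj : Pairwise (Function.onFun Disjoint
        fun i : ℕ => Set.Ioc ((2:ℝ)^(m - (i:ℤ))/2) ((2:ℝ)^(m - (i:ℤ)))) := by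
      intro i j hij
      simp only [Function.onFun]
      rw [Set.Ioc_disjoint_Ioc]
      rcases lt_or_gt_of_ne hij with h | h
      · have hle : (2:ℝ)^(m - (j:ℤ)) ≤ (2:ℝ)^(m - (i:ℤ))/2 := by
          rw [← hzp]
          exact zpow_le_zpow_right₀ (by norm_num) (by omega)
        exact le_trans (min_le_right _ _) (le_trans hle (le_max_left _ _))
      · have hle : (2:ℝ)^(m - (i:ℤ)) ≤ (2:ℝ)^(m - (j:ℤ))/2 := by
          rw [← hzp]
          exact zpow_le_zpow_right₀ (by norm_num) (by omega)
        exact le_trans (min_le_left _ _) (le_trans hle (le_max_right _ _))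
    have hUeq : (∑' i, val i)
        = ∫⁻ t in ⋃ i : ℕ, Set.Ioc ((2:ℝ)^(m-(i:ℤ))/2) ((2:ℝ)^(m-(i:ℤ))), g x t := by
      simp only [hval]
      exact (lintegral_iUnion (fun i => measurableSet_Ioc) hdisj _).symm
    rw [hUeq]
    apply lintegral_mono_set
    intro u hu
    simp only [Set.mem_iUnion] at hu
    obtain ⟨i, hi1, hi2⟩ := hu
    constructor
    · have hp : (0:ℝ) < 2^(m-(i:ℤ))/2 := by positivity
      linarith
    · exact le_trans hi2 (zpow_le_zpow_right₀ (by norm_num) (by omega))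
  -- layers
  have hDcont : Measurable D := (continuous_infDist_pt _).measurable
  set layer : ℤ → Set (Fin n → ℝ) := fun j => {x | (2:ℝ)^j ≤ D x ∧ D x < 2^(j+1)} with hlayer
  have hlayermeas : ∀ j, MeasurableSet (layer j) := fun j =>
    (measurableSet_le measurable_const hDcont).inter (measurableSet_lt hDcont measurable_const)
  have hscale : ∀ j : ℤ, ∀ x ∈ layer j, ∀ p, term p x ≠ 0 → p.2.1.1 ≤ j - 3 := by
    intro j x hx p hp
    obtain ⟨-, h9⟩ := hSupp x p hp
    have h2 : D x < 2^(j+1) := hx.2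
    have e1 : (2:ℝ)^(j+1) = 8 * 2^(j-2) := by
      have h3 : (2:ℝ)^(j+1) = 2^(3 + (j-2)) := by congr 1; ring
      rw [h3, zpow_add₀ (by norm_num : (2:ℝ) ≠ 0)]
      norm_num
    have hb : (0:ℝ) < 2^(j-2) := by positivity
    have hkpos : (0:ℝ) < 2^p.2.1.1 := by positivity
    have hlt : (2:ℝ)^p.2.1.1 < 2^(j-2) := by linarith
    have := (zpow_lt_zpow_iff_right₀ (by norm_num : (1:ℝ) < 2)).1 hlt
    omega
  set A : ℤ → (Fin n → ℤ) → Set (Fin n → ℝ) :=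
    fun j v => (dCube Q ∩ layer j) ∩ dCube (j-3, v) with hA
  set cv : ℤ → (Fin n → ℤ) → (Fin n → ℝ) :=
    fun j v i => (2:ℝ)^(j-3) * (v i + 1/2) with hcv
  set E : ℤ → (Fin n → ℤ) → Set (Fin n → ℝ) := fun j v =>
    if (A j v).Nonempty then cube (cv j v) (9 * (2:ℝ)^(j-3)) else ∅ with hE
  have hEmeas : ∀ (j : ℤ) (v : Fin n → ℤ), MeasurableSet (E j v) := by
    intro j v
    simp only [hE]
    split
    · exact measurableSet_cube _ _
    · exact MeasurableSet.empty
  have hclose : ∀ (j : ℤ) (v : Fin n → ℤ) (x₀ y : Fin n → ℝ), x₀ ∈ dCube (j-3, v) →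
      y ∈ cube (cv j v) (9 * (2:ℝ)^(j-3)) → dist y x₀ ≤ 5 * 2^(j-3) := by
    intro j v x₀ y hx₀ hy
    have hp : (0:ℝ) < 2^(j-3) := by positivity
    rw [dist_pi_le_iff (by positivity)]
    intro i
    have h1 := (dCube_subset_cube (j-3) v hx₀) i
    have h2 := hy i
    rw [Real.dist_eq]
    calc |y i - x₀ i| ≤ |y i - cv j v i| + |cv j v i - x₀ i| := abs_sub_le _ _ _
      _ ≤ 9 * 2^(j-3)/2 + 2^(j-3)/2 := by
          rw [abs_sub_comm (cv j v i)]
          exact add_le_add h2 h1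
      _ ≤ 5 * 2^(j-3) := by linarith
  have e8 : ∀ j : ℤ, (2:ℝ)^j = 8 * 2^(j-3) := by
    intro j
    have h3 : (2:ℝ)^j = 2^(3 + (j-3)) := by congr 1; ring
    rw [h3, zpow_add₀ (by norm_num : (2:ℝ) ≠ 0)]
    norm_num
  have e16 : ∀ j : ℤ, (2:ℝ)^(j+1) = 16 * 2^(j-3) := by
    intro j
    have h3 : (2:ℝ)^(j+1) = 2^(4 + (j-3)) := by congr 1; ring
    rw [h3, zpow_add₀ (by norm_num : (2:ℝ) ≠ 0)]
    norm_num
  have e32 : ∀ j : ℤ, (2:ℝ)^(j+2) = 32 * 2^(j-3) := by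
    intro j
    have h3 : (2:ℝ)^(j+2) = 2^(5 + (j-3)) := by congr 1; ring
    rw [h3, zpow_add₀ (by norm_num : (2:ℝ) ≠ 0)]
    norm_num
  have hEsubQ : ∀ (j : ℤ) (v : Fin n → ℤ), E j v ⊆ dCube Q := by
    intro j v y hy
    simp only [hE] at hy
    by_cases hne : (A j v).Nonempty
    · rw [if_pos hne] at hy
      obtain ⟨x₀, hx₀⟩ := hne
      by_contra hyQ
      have hd : dist x₀ y ≤ 5 * 2^(j-3) := by
        rw [dist_comm]; exact hclose j v x₀ y hx₀.2 hy
      have h1 : (2:ℝ)^j ≤ D x₀ := hx₀.1.2.1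
      have h2 : D x₀ ≤ dist x₀ y := infDist_le_dist_of_mem hyQ
      have hp : (0:ℝ) < 2^(j-3) := by positivity
      have := e8 j
      linarith
    · rw [if_neg hne] at hy
      exact absurd hy (Set.notMem_empty _)
  -- per (j,v) estimate
  have hjv : ∀ (j : ℤ) (v : Fin n → ℤ),
      (∫⁻ x in A j v, F x ∂μ) ≤ Car^q * μ (E j v) := by
    intro j v
    by_cases hne : (A j v).Nonempty
    · have hAmeas : MeasurableSet (A j v) :=
        ((measurableSet_dCube Q).inter (hlayermeas j)).inter (measurableSet_dCube (j-3, v))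
      have step1 : (∫⁻ x in A j v, F x ∂μ)
          ≤ ∫⁻ x in A j v, (∫⁻ t in Set.Ioc (0:ℝ) ((2:ℝ)^(j-3)), g x t)^(q/2) ∂μ := by
        apply setLIntegral_mono' hAmeas
        intro x hx
        apply ENNReal.rpow_le_rpow _ (by linarith : 0 ≤ q/2)
        exact keyA x (j-3) (fun p hp => hscale j x hx.1.2 p hp)
      have step2 : (∫⁻ x in A j v, (∫⁻ t in Set.Ioc (0:ℝ) ((2:ℝ)^(j-3)), g x t)^(q/2) ∂μ)
          ≤ ∫⁻ x in cube (cv j v) ((2:ℝ)^(j-3)),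
              (∫⁻ t in Set.Ioc (0:ℝ) ((2:ℝ)^(j-3)), g x t)^(q/2) ∂μ :=
        lintegral_mono_set (fun x hx => dCube_subset_cube (j-3) v hx.2)
      have step3 := hCar (cv j v) ((2:ℝ)^(j-3)) (by positivity)
      have hEeq : E j v = cube (cv j v) (9 * (2:ℝ)^(j-3)) := by
        simp only [hE]; rw [if_pos hne]
      rw [hEeq]
      exact le_trans step1 (le_trans step2 step3)
    · have hAe : A j v = ∅ := Set.not_nonempty_iff_eq_empty.1 hne
      rw [hAe, Measure.restrict_empty, lintegral_zero_measure]
      exact zero_le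
  -- per layer estimate
  have hlayerest : ∀ j : ℤ, (∫⁻ x in dCube Q ∩ layer j, F x ∂μ)
      ≤ ∑' v : Fin n → ℤ, Car^q * μ (E j v) := by
    intro j
    have hcov : dCube Q ∩ layer j ⊆ ⋃ v : Fin n → ℤ, A j v := by
      intro x hx
      exact Set.mem_iUnion.2 ⟨fun i => ⌊x i / (2:ℝ)^(j-3)⌋, hx, mem_dCube_floor _ x⟩
    calc (∫⁻ x in dCube Q ∩ layer j, F x ∂μ)
        ≤ ∫⁻ x in ⋃ v : Fin n → ℤ, A j v, F x ∂μ := lintegral_mono_set hcov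
      _ ≤ ∑' v : Fin n → ℤ, ∫⁻ x in A j v, F x ∂μ := lintegral_iUnion_le _ _
      _ ≤ ∑' v : Fin n → ℤ, Car^q * μ (E j v) := ENNReal.tsum_le_tsum (fun v => hjv j v)
  -- degenerate part
  have hZ : (∫⁻ x in dCube Q ∩ {x | D x ≤ 0}, F x ∂μ) = 0 := by
    have hmeas : MeasurableSet (dCube Q ∩ {x | D x ≤ 0}) :=
      (measurableSet_dCube Q).inter (measurableSet_le hDcont measurable_const)
    apply le_antisymm _ zero_le
    have hzero : ∀ x ∈ dCube Q ∩ {x | D x ≤ 0}, F x = 0 := by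
      intro x hx
      have hFx : (∑' p, term p x) = 0 := ENNReal.tsum_eq_zero.2 (fun p => by
        by_contra hp
        have h9 := (hSupp x p hp).2
        have hkpos : (0:ℝ) < 2^p.2.1.1 := by positivity
        have hDle : D x ≤ 0 := hx.2
        linarith)
      simp only [hF]
      rw [hFx, ENNReal.zero_rpow_of_pos (by linarith : 0 < q/2)]
    refine le_trans (setLIntegral_mono' hmeas (fun x hx => le_of_eq (hzero x hx))) ?_
    simp
  -- counting
  have hcount : ∀ y : Fin n → ℝ,
      (∑' p : ℤ × (Fin n → ℤ), (E p.1 p.2).indicator (1 : (Fin n → ℝ) → ℝ≥0∞) y)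
        ≤ ((4 * 10^n : ℕ) : ℝ≥0∞) * (dCube Q).indicator 1 y := by
    intro y
    by_cases hyQ : y ∈ dCube Q
    · rw [Set.indicator_of_mem hyQ, Pi.one_apply, mul_one]
      have hmemB : ∀ (j : ℤ) (v : Fin n → ℤ), y ∈ E j v →
          (⌊Real.logb 2 (D y)⌋ - 1 ≤ j ∧ j ≤ ⌊Real.logb 2 (D y)⌋ + 2) ∧
          ∀ i, ⌊y i / (2:ℝ)^(j-3)⌋ - 5 ≤ v i ∧ v i ≤ ⌊y i / (2:ℝ)^(j-3)⌋ + 4 := by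
        intro j v hy
        by_cases hne : (A j v).Nonempty
        swap
        · simp only [hE, if_neg hne] at hy
          exact absurd hy (Set.notMem_empty _)
        simp only [hE, if_pos hne] at hy
        obtain ⟨x₀, hx₀⟩ := hne
        have hp3 : (0:ℝ) < 2^(j-3) := by positivity
        have hd : dist y x₀ ≤ 5 * 2^(j-3) := hclose j v x₀ y hx₀.2 hy
        have hD1 : (2:ℝ)^j ≤ D x₀ := hx₀.1.2.1
        have hD2 : D x₀ < 2^(j+1) := hx₀.1.2.2
        have lip1 : D y ≤ D x₀ + dist y x₀ := by
          have := infDist_le_infDist_add_dist (s := (dCube Q)ᶜ) (x := y) (y := x₀)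
          simpa [hD] using this
        have lip2 : D x₀ ≤ D y + dist y x₀ := by
          have := infDist_le_infDist_add_dist (s := (dCube Q)ᶜ) (x := x₀) (y := y)
          rw [dist_comm] at this
          simpa [hD] using this
        have hDy1 : 3 * (2:ℝ)^(j-3) ≤ D y := by
          have := e8 j
          linarith
        have hDy2 : D y < (2:ℝ)^(j+2) := by
          have := e16 j
          have := e32 j
          linarith
        have hDypos : 0 < D y := by linarith
        have hjlow : (2:ℝ)^(j-2) < D y := by
          have h4 : (2:ℝ)^(j-2) = 2 * 2^(j-3) := by
            have h3 : (2:ℝ)^(j-2) = 2^(1 + (j-3)) := by congr 1; ring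
            rw [h3, zpow_add₀ (by norm_num : (2:ℝ) ≠ 0)]
            norm_num
          linarith
        have hj2 : (j:ℝ) - 2 < Real.logb 2 (D y) := by
          rw [Real.lt_logb_iff_rpow_lt (by norm_num) hDypos]
          rw [show ((j:ℝ) - 2) = ((j - 2 : ℤ) : ℝ) by push_cast; ring, Real.rpow_intCast]
          exact hjlow
        have hj3 : Real.logb 2 (D y) < (j:ℝ) + 2 := by
          rw [Real.logb_lt_iff_lt_rpow (by norm_num) hDypos]
          rw [show ((j:ℝ) + 2) = ((j + 2 : ℤ) : ℝ) by push_cast; ring, Real.rpow_intCast]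
          exact hDy2
        constructor
        · constructor
          · have h1 := Int.floor_le (Real.logb 2 (D y))
            have h5 : (⌊Real.logb 2 (D y)⌋ : ℝ) < ((j + 2 : ℤ) : ℝ) := by
              push_cast
              linarith
            have := Int.cast_lt.1 h5
            omega
          · have h6 : ((j - 2 : ℤ) : ℝ) ≤ Real.logb 2 (D y) := by
              push_cast
              linarith
            have := Int.le_floor.2 h6
            omega
        · intro i
          have hyi := hy i
          have habs := abs_le.1 hyi
          have hcvi : cv j v i = 2^(j-3) * (v i) + 2^(j-3)/2 := by
            simp only [hcv]; ring
          rw [hcvi] at habs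
          set u := y i / (2:ℝ)^(j-3) with hu
          have hui : y i = u * 2^(j-3) := by
            rw [hu]; field_simp
          have hv1 : (v i : ℝ) ≤ u + 4 := by
            have hm : (v i : ℝ) * 2^(j-3) ≤ (u + 4) * 2^(j-3) := by nlinarith
            exact le_of_mul_le_mul_right hm hp3
          have hv2 : u - 5 ≤ (v i : ℝ) := by
            have hm : (u - 5) * 2^(j-3) ≤ (v i : ℝ) * 2^(j-3) := by nlinarith
            exact le_of_mul_le_mul_right hm hp3
          have hfl1 := Int.floor_le u
          have hfl2 := Int.lt_floor_add_one u
          constructor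
          · have h7 : ((⌊u⌋ - 5 : ℤ) : ℝ) ≤ (v i : ℝ) := by
              push_cast
              linarith
            exact_mod_cast h7
          · have h7 : (v i : ℝ) < ((⌊u⌋ + 5 : ℤ) : ℝ) := by
              push_cast
              linarith
            have := Int.cast_lt.1 h7
            omega
      rw [ENNReal.tsum_eq_iSup_sum]
      apply iSup_le
      intro s
      set B : Finset (ℤ × (Fin n → ℤ)) :=
        (Finset.Icc (⌊Real.logb 2 (D y)⌋ - 1) (⌊Real.logb 2 (D y)⌋ + 2)).biUnion
          (fun j => (Fintype.piFinset (fun i =>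
            Finset.Icc (⌊y i / (2:ℝ)^(j-3)⌋ - 5) (⌊y i / (2:ℝ)^(j-3)⌋ + 4))).image
              (fun v => (j, v))) with hB
      have hsub : s.filter (fun p => y ∈ E p.1 p.2) ⊆ B := by
        intro p hp
        obtain ⟨j, v⟩ := p
        have hyE := (Finset.mem_filter.1 hp).2
        obtain ⟨⟨hj1, hj2⟩, hv⟩ := hmemB j v hyE
        rw [hB]
        apply Finset.mem_biUnion.2
        exact ⟨j, Finset.mem_Icc.2 ⟨hj1, hj2⟩, Finset.mem_image.2
          ⟨v, Fintype.mem_piFinset.2 (fun i => Finset.mem_Icc.2 (hv i)), rfl⟩⟩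
      have hcard : B.card ≤ 4 * 10^n := by
        refine le_trans Finset.card_biUnion_le ?_
        have hone : ∀ j ∈ Finset.Icc (⌊Real.logb 2 (D y)⌋ - 1) (⌊Real.logb 2 (D y)⌋ + 2),
            ((Fintype.piFinset (fun i =>
              Finset.Icc (⌊y i / (2:ℝ)^(j-3)⌋ - 5) (⌊y i / (2:ℝ)^(j-3)⌋ + 4))).image
                (fun v => (j, v))).card ≤ 10^n := by
          intro j _
          refine le_trans Finset.card_image_le ?_
          rw [Fintype.card_piFinset]
          apply le_of_eq
          calc ∏ i : Fin n,
              (Finset.Icc (⌊y i / (2:ℝ)^(j-3)⌋ - 5) (⌊y i / (2:ℝ)^(j-3)⌋ + 4)).card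
              = ∏ _i : Fin n, 10 := Finset.prod_congr rfl (fun i _ => by
                  rw [Int.card_Icc]
                  omega)
            _ = 10^n := by simp
        refine le_trans (Finset.sum_le_sum hone) ?_
        rw [Finset.sum_const, Int.card_Icc]
        simp
        omega
      calc ∑ p ∈ s, (E p.1 p.2).indicator (1 : (Fin n → ℝ) → ℝ≥0∞) y
          = ∑ p ∈ s, (if y ∈ E p.1 p.2 then (1:ℝ≥0∞) else 0) :=
            Finset.sum_congr rfl (fun p _ => Set.indicator_apply _ _ _)
        _ = ((s.filter (fun p => y ∈ E p.1 p.2)).card : ℝ≥0∞) := Finset.sum_boole _ _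
        _ ≤ ((4*10^n : ℕ) : ℝ≥0∞) := by
            have hle := le_trans (Finset.card_le_card hsub) hcard
            exact_mod_cast hle
    · have hall : ∀ p : ℤ × (Fin n → ℤ),
          (E p.1 p.2).indicator (1 : (Fin n → ℝ) → ℝ≥0∞) y = 0 := by
        intro p
        apply Set.indicator_of_notMem
        intro hy
        exact hyQ (hEsubQ p.1 p.2 hy)
      rw [ENNReal.tsum_eq_zero.2 hall]
      exact zero_le
  -- sum of measures of the E's
  have hsumE : (∑' p : ℤ × (Fin n → ℤ), μ (E p.1 p.2))
      ≤ ((4*10^n : ℕ) : ℝ≥0∞) * μ (dCube Q) := by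
    calc (∑' p : ℤ × (Fin n → ℤ), μ (E p.1 p.2))
        = ∑' p : ℤ × (Fin n → ℤ), ∫⁻ y, (E p.1 p.2).indicator 1 y ∂μ :=
          tsum_congr (fun p => (lintegral_indicator_one (hEmeas p.1 p.2)).symm)
      _ = ∫⁻ y, ∑' p : ℤ × (Fin n → ℤ), (E p.1 p.2).indicator 1 y ∂μ :=
          (lintegral_tsum (f := fun (p : ℤ × (Fin n → ℤ)) (y : Fin n → ℝ) =>
            (E p.1 p.2).indicator (1 : (Fin n → ℝ) → ℝ≥0∞) y)
            (fun p => (measurable_one.indicator (hEmeas p.1 p.2)).aemeasurable)).symm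
      _ ≤ ∫⁻ y, ((4*10^n : ℕ) : ℝ≥0∞) * (dCube Q).indicator 1 y ∂μ := lintegral_mono hcount
      _ = ((4*10^n : ℕ) : ℝ≥0∞) * μ (dCube Q) := by
          rw [lintegral_const_mul _ (measurable_one.indicator (measurableSet_dCube Q)),
            lintegral_indicator_one (measurableSet_dCube Q)]
  -- assemble
  have hmain : (∫⁻ x in dCube Q, F x ∂μ)
      ≤ ((4*10^n : ℕ) : ℝ≥0∞) * Car^q * μ (dCube Q) := by
    have hcov : dCube Q ⊆ (⋃ j : ℤ, (dCube Q ∩ layer j)) ∪ (dCube Q ∩ {x | D x ≤ 0}) := by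
      intro x hx
      by_cases hDx : 0 < D x
      · left
        obtain ⟨j, hj⟩ := _root_.exists_mem_Ico_zpow hDx (one_lt_two)
        exact Set.mem_iUnion.2 ⟨j, hx, hj.1, hj.2⟩
      · right
        exact ⟨hx, le_of_not_gt hDx⟩
    calc (∫⁻ x in dCube Q, F x ∂μ)
        ≤ ∫⁻ x in (⋃ j : ℤ, (dCube Q ∩ layer j)) ∪ (dCube Q ∩ {x | D x ≤ 0}), F x ∂μ :=
          lintegral_mono_set hcov
      _ ≤ (∫⁻ x in ⋃ j : ℤ, (dCube Q ∩ layer j), F x ∂μ)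
          + ∫⁻ x in dCube Q ∩ {x | D x ≤ 0}, F x ∂μ := lintegral_union_le _ _ _
      _ ≤ (∑' j : ℤ, ∫⁻ x in dCube Q ∩ layer j, F x ∂μ) + 0 := by
          rw [hZ]
          gcongr
          exact lintegral_iUnion_le _ _
      _ ≤ ∑' j : ℤ, ∑' v : Fin n → ℤ, Car^q * μ (E j v) := by
          rw [add_zero]
          exact ENNReal.tsum_le_tsum hlayerest
      _ = Car^q * ∑' p : ℤ × (Fin n → ℤ), μ (E p.1 p.2) := by
          simp only [ENNReal.tsum_mul_left]
          rw [ENNReal.tsum_prod']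
      _ ≤ Car^q * (((4*10^n : ℕ) : ℝ≥0∞) * μ (dCube Q)) := by
          gcongr
      _ = ((4*10^n : ℕ) : ℝ≥0∞) * Car^q * μ (dCube Q) := by ring
  calc (∫⁻ x in dCube Q,
        (∑' S : {S : ℤ × (Fin n → ℤ) // dCube S ⊆ dCube Q},
          ∑' R : {R : ℤ × (Fin n → ℤ) // Good R ∧ dParent^[r] R = S.1},
            (dCube R.1).indicator
              (fun y => ∫⁻ t in Set.Ioc ((2 : ℝ) ^ R.1.1 / 2) ((2 : ℝ) ^ R.1.1),
                ENNReal.ofReal ((θ t y) ^ 2 / t)) x) ^ (q / 2) ∂μ)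
      = ∫⁻ x in dCube Q, F x ∂μ := lintegral_congr (fun x => by rw [hF, hFS x])
    _ ≤ ((4*10^n : ℕ) : ℝ≥0∞) * Car^q * μ (dCube Q) := hmain
end
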